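/- Frame axioms add no inexecutabilities modulo the implicit ones: let FRA_a = {¬l → [a]¬l : a ⇝̸ l} and let IMPI_a be the set of all formulas (⋀antecedents(Ê) ∧ ¬χ) → [a]⊥ for Ê ⊆ E_a, χ ∈ NewCons(S, ⋀consequents(Ê)) with all literals of χ independent of a (a ⇝̸ l for each l ∈ χ) and S ∪ {⋀antecedents(Ê), ¬χ} consistent. Then S, E_a, I_a, IMPI_a, FRA_a ⊨_K A → [a]⊥ implies S, E_a, I_a, IMPI_a ⊨_K A → [a]⊥. -/
import Mathlib


/-! Classical propositional formulas. -/
inductive PForm (α : Type) : Type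
  | atom : α → PForm α
  | fls  : PForm α
  | not  : PForm α → PForm α
  | and  : PForm α → PForm α → PForm α
  | or   : PForm α → PForm α → PForm α
  | imp  : PForm α → PForm α → PForm α

def PForm.Sat {α : Type} (v : α → Prop) : PForm α → Prop
  | atom p => v p
  | fls => False
  | not φ => ¬ Sat v φ
  | and φ ψ => Sat v φ ∧ Sat v ψ
  | or φ ψ => Sat v φ ∨ Sat v ψ
  | imp φ ψ => Sat v φ → Sat v ψ

/-- Classical (propositional) global consequence. -/
def EntailsCl {α : Type} (Γ : Set (PForm α)) (φ : PForm α) : Prop :=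
  ∀ v : α → Prop, (∀ ψ ∈ Γ, PForm.Sat v ψ) → PForm.Sat v φ

/-- Multimodal formulas with one box per action. -/
inductive MForm (Act α : Type) : Type
  | atom : α → MForm Act α
  | fls  : MForm Act α
  | not  : MForm Act α → MForm Act α
  | and  : MForm Act α → MForm Act α → MForm Act α
  | or   : MForm Act α → MForm Act α → MForm Act α
  | imp  : MForm Act α → MForm Act α → MForm Act α
  | box  : Act → MForm Act α → MForm Act α

def PForm.toM {Act α : Type} : PForm α → MForm Act α
  | .atom p => .atom p
  | .fls => .fls
  | .not φ => .not φ.toM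
  | .and φ ψ => .and φ.toM ψ.toM
  | .or φ ψ => .or φ.toM ψ.toM
  | .imp φ ψ => .imp φ.toM ψ.toM

/-- A Kripke model for multimodal K. -/
structure KModel (Act α : Type) where
  W : Type
  R : Act → W → W → Prop
  V : W → α → Prop

def MForm.Sat {Act α : Type} (M : KModel Act α) : M.W → MForm Act α → Prop
  | w, atom p => M.V w p
  | _, fls => False
  | w, not φ => ¬ Sat M w φ
  | w, and φ ψ => Sat M w φ ∧ Sat M w ψ
  | w, or φ ψ => Sat M w φ ∨ Sat M w ψ
  | w, imp φ ψ => Sat M w φ → Sat M w ψ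
  | w, box a φ => ∀ w', M.R a w w' → Sat M w' φ

/-- Global truth in a model. -/
def Glob {Act α : Type} (M : KModel Act α) (Φ : MForm Act α) : Prop :=
  ∀ w : M.W, MForm.Sat M w Φ

/-- Global consequence in multimodal K. -/
def ConsK {Act α : Type} (Γ : Set (MForm Act α)) (Φ : MForm Act α) : Prop :=
  ∀ M : KModel Act α, (∀ Ψ ∈ Γ, Glob M Ψ) → Glob M Φ

/-- Literals. -/
abbrev Lit (α : Type) := α × Bool

def Lit.Sat {α : Type} (v : α → Prop) (l : Lit α) : Prop :=
  if l.2 then v l.1 else ¬ v l.1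

/-- A dependence relation `⇝ ⊆ Act × Lit`. -/
abbrev Dep (Act α : Type) := Act → Lit α → Prop

/-- `⇝`-models: along `R a`, literals independent of `a` persist. -/
def IsDepModel {Act α : Type} (dep : Dep Act α) (M : KModel Act α) : Prop :=
  ∀ (a : Act) (w w' : M.W), M.R a w w' → ∀ p : α,
    (¬ dep a (p, true) → ¬ M.V w p → ¬ M.V w' p) ∧
    (¬ dep a (p, false) → M.V w p → M.V w' p)

/-- Dependence-based global consequence. -/
def ConsDep {Act α : Type} (dep : Dep Act α) (Γ : Set (MForm Act α)) (Φ : MForm Act α) : Prop :=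
  ∀ M : KModel Act α, IsDepModel dep M → (∀ Ψ ∈ Γ, Glob M Ψ) → Glob M Φ

/-- An action theory: static laws `S`, effect laws `E` (antecedent/consequent
pairs), executability laws `X` (antecedents), inexecutability laws `I`
(antecedents). -/
structure ActionTheory (Act α : Type) where
  S : Set (PForm α)
  E : Act → Set (PForm α × PForm α)
  X : Act → Set (PForm α)
  I : Act → Set (PForm α)

/-- `⟨a⟩Φ`. -/
def MForm.diam {Act α : Type} (a : Act) (Φ : MForm Act α) : MForm Act α :=
  .not (.box a (.not Φ))

/-- Effect law `A → [a]C`. -/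
def effLaw {Act α : Type} (a : Act) (e : PForm α × PForm α) : MForm Act α :=
  .imp e.1.toM (.box a e.2.toM)

/-- Executability law `A → ⟨a⟩⊤`. -/
def exeLaw {Act α : Type} (a : Act) (A : PForm α) : MForm Act α :=
  .imp A.toM (MForm.diam a (.not .fls))

/-- Inexecutability law `A → [a]⊥`. -/
def inexLaw {Act α : Type} (a : Act) (A : PForm α) : MForm Act α :=
  .imp A.toM (.box a .fls)

variable {Act α : Type}

def staticForms (T : ActionTheory Act α) : Set (MForm Act α) := PForm.toM '' T.S
def effForms (T : ActionTheory Act α) (a : Act) : Set (MForm Act α) := effLaw a '' T.E a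
def exeForms (T : ActionTheory Act α) (a : Act) : Set (MForm Act α) := exeLaw a '' T.X a
def inexForms (T : ActionTheory Act α) (a : Act) : Set (MForm Act α) := inexLaw a '' T.I a

/-- The action theory of the single action `a`:  `S ∪ E_a ∪ X_a ∪ I_a`. -/
def formsFor (T : ActionTheory Act α) (a : Act) : Set (MForm Act α) :=
  staticForms T ∪ effForms T a ∪ exeForms T a ∪ inexForms T a

/-- The whole action theory:  `S ∪ E ∪ X ∪ I`. -/
def allForms (T : ActionTheory Act α) : Set (MForm Act α) :=
  staticForms T ∪ (⋃ a, effForms T a) ∪ (⋃ a, exeForms T a) ∪ (⋃ a, inexForms T a)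

/-- Postulate PS for action `a`: no implicit static laws. -/
def PS (T : ActionTheory Act α) (dep : Dep Act α) (a : Act) : Prop :=
  ∀ φ : PForm α, ConsDep dep (formsFor T a) φ.toM → EntailsCl T.S φ

/-- Postulate PS*: no implicit static laws for the whole theory. -/
def PSstar (T : ActionTheory Act α) (dep : Dep Act α) : Prop :=
  ∀ φ : PForm α, ConsDep dep (allForms T) φ.toM → EntailsCl T.S φ

/-- Postulate PI for action `a`: no implicit inexecutability laws. -/
def PIpost (T : ActionTheory Act α) (dep : Dep Act α) (a : Act) : Prop :=
  ∀ A : PForm α, ConsDep dep (formsFor T a) (inexLaw a A) →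
    ConsK (staticForms T ∪ inexForms T a) (inexLaw a A)

/-- Postulate PI*: no implicit inexecutability laws for the whole theory. -/
def PIstar (T : ActionTheory Act α) (dep : Dep Act α) : Prop :=
  ∀ (a : Act) (A : PForm α), ConsDep dep (allForms T) (inexLaw a A) →
    ConsK (staticForms T ∪ ⋃ a', inexForms T a') (inexLaw a A)

/-! Clauses, prime implicates, new consequences. -/

abbrev Clause (α : Type) := Finset (Lit α)

def Clause.Sat {α : Type} (v : α → Prop) (c : Clause α) : Prop :=
  ∃ l ∈ c, Lit.Sat v l

def EntailsC {α : Type} (Γ : Set (PForm α)) (c : Clause α) : Prop :=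
  ∀ v : α → Prop, (∀ φ ∈ Γ, PForm.Sat v φ) → Clause.Sat v c

def ClEntails {α : Type} (c c' : Clause α) : Prop :=
  ∀ v : α → Prop, Clause.Sat v c → Clause.Sat v c'

/-- Prime implicates of (the conjunction of) `Γ`. -/
def PrimImp {α : Type} (Γ : Set (PForm α)) : Set (Clause α) :=
  {c | EntailsC Γ c ∧ ∀ c' : Clause α, EntailsC Γ c' → ClEntails c' c → ClEntails c c'}

/-- `NewCons(Γ, ψ) = PI(Γ ∧ ψ) \ PI(Γ)`. -/
def NewCons {α : Type} (Γ : Set (PForm α)) (ψ : PForm α) : Set (Clause α) :=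
  PrimImp (Γ ∪ {ψ}) \ PrimImp Γ

def Lit.toForm {α : Type} (l : Lit α) : PForm α :=
  if l.2 then .atom l.1 else .not (.atom l.1)

def Lit.neg {α : Type} (l : Lit α) : Lit α := (l.1, !l.2)

noncomputable def Clause.toForm {α : Type} (c : Clause α) : PForm α :=
  c.toList.foldr (fun l φ => (Lit.toForm l).or φ) .fls

/-- Conjunction of a list of formulas. -/
def conjList {α : Type} (L : List (PForm α)) : PForm α :=
  L.foldr .and (.not .fls)

/-- Frame axioms `¬l → [a]¬l` for literals `l` independent of `a`. -/
def FRA {Act α : Type} (dep : Dep Act α) (a : Act) : Set (MForm Act α) :=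
  { Φ | ∃ l : Lit α, ¬ dep a l ∧
        Φ = .imp ((Lit.neg l).toForm.toM) (.box a ((Lit.neg l).toForm.toM)) }

/-- The candidate implicit inexecutability laws
`(⋀antecedents(Ê) ∧ ¬χ) → [a]⊥` for `Ê ⊆ E_a`,
`χ ∈ NewCons(S, ⋀consequents(Ê))` with all literals of `χ` independent of `a`
and `S`-consistent antecedent. -/
def IMPI {Act α : Type} (T : ActionTheory Act α) (dep : Dep Act α) (a : Act) :
    Set (MForm Act α) :=
  { Φ | ∃ (L : List (PForm α × PForm α)) (χ : Clause α),
      (∀ e ∈ L, e ∈ T.E a) ∧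
      χ ∈ NewCons T.S (conjList (L.map Prod.snd)) ∧
      (∀ l ∈ χ, ¬ dep a l) ∧
      (∃ v : α → Prop, (∀ ψ ∈ T.S, PForm.Sat v ψ) ∧
        PForm.Sat v (conjList (L.map Prod.fst)) ∧ ¬ Clause.Sat v χ) ∧
      Φ = inexLaw a (.and (conjList (L.map Prod.fst)) (.not χ.toForm)) }

/-! ### Auxiliary lemmas -/

theorem sat_toM {Act α : Type} (M : KModel Act α) (w : M.W) (φ : PForm α) :
    MForm.Sat M w (φ.toM (Act := Act)) ↔ PForm.Sat (M.V w) φ := by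
  induction φ <;> simp [PForm.toM, MForm.Sat, PForm.Sat, *]

theorem sat_congr {α : Type} {v v' : α → Prop} (h : ∀ p, v p ↔ v' p) (φ : PForm α) :
    PForm.Sat v φ ↔ PForm.Sat v' φ := by
  induction φ <;> simp [PForm.Sat, h, *]

theorem litSat_congr {α : Type} {v v' : α → Prop} (h : ∀ p, v p ↔ v' p) (l : Lit α) :
    Lit.Sat v l ↔ Lit.Sat v' l := by
  obtain ⟨p, b⟩ := l; cases b <;> simp [Lit.Sat, h p]

theorem clauseSat_congr {α : Type} {v v' : α → Prop} (h : ∀ p, v p ↔ v' p) (c : Clause α) :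
    Clause.Sat v c ↔ Clause.Sat v' c := by
  unfold Clause.Sat
  constructor <;> rintro ⟨l, hl, hs⟩
  · exact ⟨l, hl, (litSat_congr h l).1 hs⟩
  · exact ⟨l, hl, (litSat_congr h l).2 hs⟩

theorem litSat_neg {α : Type} (v : α → Prop) (l : Lit α) :
    Lit.Sat v (Lit.neg l) ↔ ¬ Lit.Sat v l := by
  obtain ⟨p, b⟩ := l; cases b <;> simp [Lit.Sat, Lit.neg]

theorem litSat_toForm {α : Type} (v : α → Prop) (l : Lit α) :
    PForm.Sat v l.toForm ↔ Lit.Sat v l := by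
  obtain ⟨p, b⟩ := l; cases b <;> simp [Lit.Sat, Lit.toForm, PForm.Sat]

theorem sat_foldr_or {α : Type} (v : α → Prop) (L : List (Lit α)) :
    PForm.Sat v (L.foldr (fun l φ => (Lit.toForm l).or φ) .fls) ↔ ∃ l ∈ L, Lit.Sat v l := by
  induction L with
  | nil => simp [PForm.Sat]
  | cons a L ih => simp [PForm.Sat, ih, litSat_toForm]

theorem clauseSat_toForm {α : Type} (v : α → Prop) (c : Clause α) :
    PForm.Sat v c.toForm ↔ Clause.Sat v c := by
  unfold Clause.toForm Clause.Sat
  rw [sat_foldr_or]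
  constructor <;> rintro ⟨l, hl, hs⟩ <;> exact ⟨l, by simpa using hl, hs⟩

theorem conjList_sat {α : Type} (v : α → Prop) (L : List (PForm α)) :
    PForm.Sat v (conjList L) ↔ ∀ φ ∈ L, PForm.Sat v φ := by
  induction L with
  | nil => simp [conjList, PForm.Sat]
  | cons a L ih => simp [conjList, PForm.Sat] at ih ⊢; tauto

/-- If `c'` is falsifiable and `c ⊨ c'` then `c ⊆ c'`. -/
theorem clEntails_subset {α : Type} {c c' : Clause α} (v₀ : α → Prop)
    (hfal : ¬ Clause.Sat v₀ c') (h : ClEntails c c') : c ⊆ c' := by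
  classical
  intro l hl
  by_contra hl'
  set v : α → Prop := fun p => (p, true) ∉ c' ∧ ((p, false) ∈ c' ∨ (p = l.1 ∧ l.2 = true))
    with hv
  have hnt : ∀ p : α, ¬ ((p, true) ∈ c' ∧ (p, false) ∈ c') := by
    rintro p ⟨h1, h2⟩
    by_cases hp : v₀ p
    · exact hfal ⟨(p, true), h1, by simpa [Lit.Sat] using hp⟩
    · exact hfal ⟨(p, false), h2, by simpa [Lit.Sat] using hp⟩
  have hvc' : ¬ Clause.Sat v c' := by
    rintro ⟨⟨p, b⟩, hm, hs⟩
    cases b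
    · simp only [Lit.Sat, if_neg Bool.false_ne_true] at hs
      exact hs ⟨fun ht => hnt p ⟨ht, hm⟩, Or.inl hm⟩
    · simp only [Lit.Sat, if_pos rfl] at hs
      exact hs.1 hm
  have hvl : Lit.Sat v l := by
    obtain ⟨q, b⟩ := l
    cases b
    · simp only [Lit.Sat, if_neg Bool.false_ne_true]
      rintro ⟨h1, h2 | ⟨-, h3⟩⟩
      · exact hl' h2
      · exact Bool.noConfusion h3
    · simp only [Lit.Sat, if_pos rfl]
      exact ⟨hl', Or.inr ⟨rfl, rfl⟩⟩
  exact hvc' (h v ⟨l, hl, hvl⟩)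

/-- Appendix B, Lemma 2: frame axioms add no inexecutabilities
modulo the implicit inexecutability laws `IMPI_a`. -/
theorem stmt_16 [Fintype α] {Act : Type} (T : ActionTheory Act α) (dep : Dep Act α)
    (a : Act) (A : PForm α)
    (h : ConsK (staticForms T ∪ effForms T a ∪ inexForms T a ∪ IMPI T dep a ∪ FRA dep a)
          (inexLaw a A)) :
    ConsK (staticForms T ∪ effForms T a ∪ inexForms T a ∪ IMPI T dep a) (inexLaw a A) := by
  classical
  intro M hM w hA w' hRww'
  set v : α → Prop := M.V w with hvdef
  have hvS : ∀ φ ∈ T.S, PForm.Sat v φ := by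
    intro φ hφ
    exact (sat_toM M w φ).1 (hM _ (Or.inl (Or.inl (Or.inl ⟨φ, hφ, rfl⟩))) w)
  have hvA : PForm.Sat v A := (sat_toM M w A).1 hA
  -- no inexecutability law (from I or IMPI) is active at w
  have hI : ∀ B ∈ T.I a, ¬ PForm.Sat v B := by
    intro B hB hSB
    exact hM _ (Or.inl (Or.inr ⟨B, hB, rfl⟩)) w ((sat_toM M w B).2 hSB) w' hRww'
  have hIM : ∀ ψ : PForm α, inexLaw a ψ ∈ IMPI T dep a → ¬ PForm.Sat v ψ := by
    intro ψ hψ hSψ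
    exact hM _ (Or.inr hψ) w ((sat_toM M w ψ).2 hSψ) w' hRww'
  -- the clause of independent literals falsified at w
  set D : Clause α :=
    Finset.univ.filter (fun l : Lit α => ¬ dep a l ∧ Lit.Sat v (Lit.neg l)) with hDdef
  have hDmem' : ∀ l : Lit α, l ∈ D ↔ ¬ dep a l ∧ Lit.Sat v (Lit.neg l) := by
    intro l; simp [hDdef]
  have hvD : ¬ Clause.Sat v D := by
    rintro ⟨l, hl, hs⟩
    exact (litSat_neg v l).1 ((hDmem' l).1 hl).2 hs
  -- the auxiliary model
  let W' := {u : α → Prop // ∀ φ ∈ T.S, PForm.Sat u φ}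
  let Rc : W' → W' → Prop := fun x y =>
    (∀ e ∈ T.E a, PForm.Sat x.1 e.1 → PForm.Sat y.1 e.2) ∧
    (∀ B ∈ T.I a, ¬ PForm.Sat x.1 B) ∧
    (∀ ψ : PForm α, inexLaw a ψ ∈ IMPI T dep a → ¬ PForm.Sat x.1 ψ) ∧
    (∀ l : Lit α, ¬ dep a l → Lit.Sat x.1 (Lit.neg l) → Lit.Sat y.1 (Lit.neg l))
  let M' : KModel Act α := ⟨W', fun _ => Rc, fun x => x.1⟩
  have hGlob : ∀ Ψ ∈ (staticForms T ∪ effForms T a ∪ inexForms T a ∪ IMPI T dep a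
      ∪ FRA dep a), Glob M' Ψ := by
    rintro Ψ ((((⟨φ, hφ, rfl⟩ | ⟨e, he, rfl⟩) | ⟨B, hB, rfl⟩) | hΨ) | ⟨l, hdep, rfl⟩)
    · intro x
      exact (sat_toM M' x φ).2 (x.2 φ hφ)
    · intro x h1 y hy
      exact (sat_toM M' y e.2).2 ((hy : Rc x y).1 e he ((sat_toM M' x e.1).1 h1))
    · intro x h1 y hy
      exact (hy : Rc x y).2.1 B hB ((sat_toM M' x B).1 h1)
    · obtain ⟨L, χ, h1, h2, h3, h4, rfl⟩ := hΨ
      intro x hs y hy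
      exact (hy : Rc x y).2.2.1 _ ⟨L, χ, h1, h2, h3, h4, rfl⟩ ((sat_toM M' x _).1 hs)
    · intro x hs y hy
      refine (sat_toM M' y _).2 ((litSat_toForm _ _).2 ?_)
      exact (hy : Rc x y).2.2.2 l hdep ((litSat_toForm _ _).1 ((sat_toM M' x _).1 hs))
  have hNoSucc : ∀ x : W', PForm.Sat x.1 A → ∀ y : W', ¬ Rc x y := by
    intro x hxA y hy
    exact h M' hGlob x ((sat_toM M' x A).2 hxA) y hy
  -- key step: every S-valuation satisfying the active consequents satisfies D
  have hstar : ∀ u : α → Prop, (∀ φ ∈ T.S, PForm.Sat u φ) →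
      (∀ e ∈ T.E a, PForm.Sat v e.1 → PForm.Sat u e.2) → Clause.Sat u D := by
    intro u hS hE
    by_contra hC
    refine hNoSucc ⟨v, hvS⟩ hvA ⟨u, hS⟩ ⟨hE, hI, hIM, ?_⟩
    intro l hd hn
    refine (litSat_neg u l).2 fun hsl => hC ⟨l, (hDmem' l).2 ⟨hd, hn⟩, hsl⟩
  -- extract a finite list of active effect laws (by finiteness of valuations)
  have hex : ∀ b : α → Bool, (∀ φ ∈ T.S, PForm.Sat (fun p => b p = true) φ) →
      ¬ Clause.Sat (fun p => b p = true) D →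
      ∃ e, e ∈ T.E a ∧ PForm.Sat v e.1 ∧ ¬ PForm.Sat (fun p => b p = true) e.2 := by
    intro b hS hD
    by_contra hne
    push_neg at hne
    exact hD (hstar _ hS fun e he h1 => hne e he h1)
  choose f hf1 hf2 hf3 using hex
  haveI := Classical.decEq α
  set L : List (PForm α × PForm α) :=
    (Finset.univ : Finset (α → Bool)).toList.filterMap
      (fun b => if hb : (∀ φ ∈ T.S, PForm.Sat (fun p => b p = true) φ) ∧
          ¬ Clause.Sat (fun p => b p = true) D then some (f b hb.1 hb.2) else none) with hLdef
  have hL1 : ∀ e ∈ L, e ∈ T.E a ∧ PForm.Sat v e.1 := by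
    intro e he
    rw [hLdef, List.mem_filterMap] at he
    obtain ⟨b, -, hb⟩ := he
    split_ifs at hb with hcond
    · cases hb
      exact ⟨hf1 b hcond.1 hcond.2, hf2 b hcond.1 hcond.2⟩
  have hLmem : ∀ (b : α → Bool) (h1 : ∀ φ ∈ T.S, PForm.Sat (fun p => b p = true) φ)
      (h2 : ¬ Clause.Sat (fun p => b p = true) D), f b h1 h2 ∈ L := by
    intro b h1 h2
    rw [hLdef, List.mem_filterMap]
    exact ⟨b, by simp, by rw [dif_pos ⟨h1, h2⟩]⟩
  -- D is an implicate of S together with the conjunction of the consequents of L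
  set Γ' : Set (PForm α) := T.S ∪ {conjList (L.map Prod.snd)} with hΓ'def
  have hL2 : EntailsC Γ' D := by
    intro u hu
    have huS : ∀ φ ∈ T.S, PForm.Sat u φ := fun φ hφ => hu φ (Or.inl hφ)
    have huC : ∀ φ ∈ L.map Prod.snd, PForm.Sat u φ :=
      (conjList_sat u _).1 (hu _ (Or.inr rfl))
    by_contra hD
    set b : α → Bool := fun p => decide (u p) with hbdef
    have hcong : ∀ p, u p ↔ (fun p => b p = true) p := by
      intro p; simp [hbdef]
    have hbS : ∀ φ ∈ T.S, PForm.Sat (fun p => b p = true) φ :=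
      fun φ hφ => (sat_congr hcong φ).1 (huS φ hφ)
    have hbD : ¬ Clause.Sat (fun p => b p = true) D :=
      fun hc => hD ((clauseSat_congr hcong D).2 hc)
    refine hf3 b hbS hbD ((sat_congr hcong _).1 ?_)
    exact huC _ (List.mem_map.2 ⟨f b hbS hbD, hLmem b hbS hbD, rfl⟩)
  -- choose a minimal implicate inside D : it is a prime implicate
  set Sset : Finset (Clause α) := D.powerset.filter (fun c => EntailsC Γ' c) with hSdef
  have hDin : D ∈ Sset := by
    rw [hSdef, Finset.mem_filter]
    exact ⟨Finset.mem_powerset.2 (Finset.Subset.refl D), hL2⟩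
  obtain ⟨χ, hχmem, hχmin⟩ := Finset.exists_min_image Sset Finset.card ⟨D, hDin⟩
  have hχD : χ ⊆ D := Finset.mem_powerset.1 (Finset.mem_filter.1 (by rwa [hSdef] at hχmem)).1
  have hχE : EntailsC Γ' χ := (Finset.mem_filter.1 (by rwa [hSdef] at hχmem)).2
  have hvχ : ¬ Clause.Sat v χ := by
    rintro ⟨l, hl, hs⟩
    exact hvD ⟨l, hχD hl, hs⟩
  have hprime : χ ∈ PrimImp Γ' := by
    refine ⟨hχE, fun c' hc'E hc'χ => ?_⟩
    have hsub : c' ⊆ χ := clEntails_subset v hvχ hc'χ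
    have hc'mem : c' ∈ Sset := by
      rw [hSdef, Finset.mem_filter]
      exact ⟨Finset.mem_powerset.2 (hsub.trans hχD), hc'E⟩
    have heq : c' = χ := Finset.eq_of_subset_of_card_le hsub (hχmin c' hc'mem)
    subst heq
    exact fun _ hs => hs
  have hNC : χ ∈ NewCons T.S (conjList (L.map Prod.snd)) := by
    refine ⟨hprime, fun hmem => hvχ (hmem.1 v hvS)⟩
  -- the corresponding implicit inexecutability law is in IMPI
  have hΦ : inexLaw a (.and (conjList (L.map Prod.fst)) (.not χ.toForm)) ∈ IMPI T dep a := by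
    refine ⟨L, χ, fun e he => (hL1 e he).1, hNC,
      fun l hl => ((hDmem' l).1 (hχD hl)).1, ⟨v, hvS, ?_, hvχ⟩, rfl⟩
    refine (conjList_sat v _).2 ?_
    intro φ hφ
    obtain ⟨e, he, rfl⟩ := List.mem_map.1 hφ
    exact (hL1 e he).2
  -- contradiction : the IMPI law forbids the successor w'
  have hant : PForm.Sat v (PForm.and (conjList (L.map Prod.fst)) (.not χ.toForm)) := by
    refine ⟨?_, fun hc => hvχ ((clauseSat_toForm v χ).1 hc)⟩
    refine (conjList_sat v _).2 ?_
    intro φ hφ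
    obtain ⟨e, he, rfl⟩ := List.mem_map.1 hφ
    exact (hL1 e he).2
  exact hM _ (Or.inr hΦ) w ((sat_toM M w _).2 hant) w' hRww'
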